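/- Let X be a Tychonoff space with dense subspace D such that every continuous real-valued function on D extends continuously to X. Let Z be a metric space and p : X → Z continuous such that p|D : D → Z is an open surjective map. Then for every open set U ⊆ X one has p(U) = p(U ∩ D); in particular p is an open map. -/

import Mathlib

open Set Topology

theorem stmt_1 {X Z : Type*} [TopologicalSpace X] [T35Space X] [MetricSpace Z]
    (D : Set X) (hD : Dense D)
    (hext : ∀ f : D → ℝ, Continuous f → ∃ F : X → ℝ, Continuous F ∧ ∀ d : D, F d = f d)
    (p : X → Z) (hp : Continuous p)
    (hsurj : ∀ z : Z, ∃ d ∈ D, p d = z)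
    (hopen : ∀ U : Set X, IsOpen U → IsOpen (p '' (U ∩ D))) :
    (∀ U : Set X, IsOpen U → p '' U = p '' (U ∩ D)) ∧ IsOpenMap p := by
  have key : ∀ U : Set X, IsOpen U → p '' U = p '' (U ∩ D) := by
    intro U hU
    refine Subset.antisymm ?_ (image_mono (f := p) (inter_subset_left))
    rintro z ⟨x, hx, rfl⟩
    by_contra h
    -- get U' open nbhd of x with closure U' ⊆ U
    obtain ⟨t, ht, htc, htU⟩ := exists_mem_nhds_isClosed_subset (hU.mem_nhds hx)
    set U' : Set X := interior t with hU'def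
    have hU'o : IsOpen U' := isOpen_interior
    have hxU' : x ∈ U' := mem_interior_iff_mem_nhds.mpr ht
    have hclU' : closure U' ⊆ U := (closure_minimal interior_subset htc).trans htU
    -- φ : X → ℝ, φ x = 1, φ = 0 outside U', 0 ≤ φ ≤ 1
    obtain ⟨f, hfc, hfx, hfK⟩ := CompletelyRegularSpace.completely_regular x U'ᶜ
      hU'o.isClosed_compl (by simpa using hxU')
    set φ : X → ℝ := fun y => 1 - (f y : ℝ) with hφdef
    have hφc : Continuous φ := continuous_const.sub (continuous_subtype_val.comp hfc)
    have hφx : φ x = 1 := by simp [hφdef, hfx]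
    have hφ0 : ∀ y, y ∉ U' → φ y = 0 := by
      intro y hy
      have := hfK (by simpa using hy)
      simp [hφdef, this, Pi.one_apply]
    -- g : D → ℝ
    set g : D → ℝ := fun d => φ d / dist (p d) (p x) with hgdef
    have hgc : Continuous g := by
      rw [continuous_iff_continuousAt]
      intro d
      by_cases hpd : p (d : X) = p x
      · -- d ∉ U, so φ = 0 on a neighborhood
        have hdU : (d : X) ∉ U := by
          intro hdU
          exact h ⟨d, ⟨hdU, d.2⟩, hpd⟩
        have hnb : (Subtype.val ⁻¹' (closure U')ᶜ : Set D) ∈ 𝓝 d := by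
          refine (isClosed_closure.isOpen_compl.preimage continuous_subtype_val).mem_nhds ?_
          exact fun hc => hdU (hclU' hc)
        have : ∀ᶠ e in 𝓝 d, g e = 0 := by
          filter_upwards [hnb] with e he
          have : φ (e : X) = 0 := hφ0 _ (fun h' => he (subset_closure h'))
          simp [hgdef, this]
        have hgd : g d = 0 := by
          have : φ (d : X) = 0 := hφ0 _ (fun h' => hdU (hclU' (subset_closure h')))
          simp [hgdef, this]
        exact (continuousAt_congr (by filter_upwards [this] with e he using he)).mpr
          (by simpa [hgd] using continuousAt_const)
      · have hne : dist (p (d : X)) (p x) ≠ 0 := by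
          simpa [dist_eq_zero] using hpd
        exact ((hφc.comp continuous_subtype_val).continuousAt).div
          (((continuous_dist.comp ((hp.comp continuous_subtype_val).prodMk
            continuous_const)).continuousAt)) hne
    obtain ⟨F, hFc, hFeq⟩ := hext g hgc
    -- neighborhood where F < F x + 1
    set M : ℝ := max (F x + 1) 1 with hMdef
    have hM0 : 0 < M := lt_of_lt_of_le one_pos (le_max_right _ _)
    set N : Set X := F ⁻¹' (Iio (F x + 1)) with hNdef
    have hNo : IsOpen N := isOpen_Iio.preimage hFc
    have hxN : x ∈ N := by simp [hNdef]
    set W : Set X := N ∩ U' ∩ φ ⁻¹' (Ioi (1/2:ℝ)) with hWdef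
    have hWo : IsOpen W := ((hNo.inter hU'o).inter (isOpen_Ioi.preimage hφc))
    have hxW : x ∈ W := ⟨⟨hxN, hxU'⟩, by simp only [mem_preimage, hφx, mem_Ioi]; norm_num⟩
    have hSo : IsOpen (p '' (W ∩ D)) := hopen W hWo
    have hzcl : p x ∈ closure (p '' (W ∩ D)) := by
      have hx' : x ∈ closure (W ∩ D) := hD.open_subset_closure_inter hWo hxW
      exact (image_closure_subset_closure_image hp) ⟨x, hx', rfl⟩
    -- pick z in p''(W∩D) close to p x
    have hε : (0:ℝ) < 1/(4*M) := by positivity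
    obtain ⟨z, hzS, hzd⟩ := Metric.mem_closure_iff.mp hzcl _ hε
    obtain ⟨d, ⟨hdW, hdD⟩, rfl⟩ := hzS
    have hdU : (d : X) ∈ U := htU (interior_subset hdW.1.2)
    have hpdne : p d ≠ p x := fun hc => h ⟨d, ⟨hdU, hdD⟩, hc⟩
    have hdistpos : 0 < dist (p d) (p x) := dist_pos.mpr hpdne
    have hdistlt : dist (p d) (p x) < 1/(4*M) := by
      simpa [dist_comm] using hzd
    have hφd : (1/2:ℝ) < φ d := hdW.2
    have hgd : g ⟨d, hdD⟩ = φ d / dist (p d) (p x) := rfl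
    have hFd : F d < F x + 1 := hdW.1.1
    have hFd' : F d = φ d / dist (p d) (p x) := by
      rw [hFeq ⟨d, hdD⟩, hgd]
    have hbig : 2*M ≤ φ d / dist (p d) (p x) := by
      have h1 : (1/2:ℝ) / (1/(4*M)) ≤ φ d / dist (p d) (p x) :=
        div_le_div₀ (le_of_lt (lt_trans one_half_pos hφd)) (le_of_lt hφd) hdistpos (le_of_lt hdistlt)
      have h2 : (1/2:ℝ) / (1/(4*M)) = 2*M := by field_simp; ring
      linarith
    have hle : F x + 1 ≤ M := le_max_left _ _
    rw [hFd'] at hFd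
    linarith
  exact ⟨key, fun U hU => (key U hU) ▸ hopen U hU⟩
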